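/- Let $\Lambda = \{\lambda_n\}$ be a nondecreasing sequence of positive reals with $\lambda_1 > 1$. If $\limsup_{n\to\infty} \sup_{1 \leq m \leq 2^n} \frac{m^{1/p(n)}}{\sum_{j=1}^m (1/\lambda_j)} < \infty$, then every function $f : [0,1]^2 \to \mathbb{R}$ of bounded $\Lambda^{\#}$-variation belongs to the class $BV^{\#}(p(n) \uparrow \infty)$; that is, $\Lambda^{\#}BV \subset BV^{\#}(p(n) \uparrow \infty)$. -/

import Mathlib

/-- A finite collection of `m` nonoverlapping open subintervals `(a i, b i)` of `[0,1]`. -/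
def Nonoverlap (m : ℕ) (a b : ℕ → ℝ) : Prop :=
  (∀ i < m, 0 ≤ a i ∧ a i < b i ∧ b i ≤ 1) ∧
  ∀ i < m, ∀ j < m, i ≠ j → Set.Ioo (a i) (b i) ∩ Set.Ioo (a j) (b j) = ∅

/-- `Λ^{#}V_1(f) ≤ M`: all Waterman-type sums in the first variable, with a separate
point `y i` for each interval, are bounded by `M`. -/
def LamSharpV1 (lam : ℕ → ℝ) (f : ℝ → ℝ → ℝ) (M : ℝ) : Prop :=
  ∀ (m : ℕ) (a b y : ℕ → ℝ), Nonoverlap m a b → (∀ i < m, y i ∈ Set.Icc (0:ℝ) 1) →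
    ∑ i ∈ Finset.range m, |f (b i) (y i) - f (a i) (y i)| / lam i ≤ M

/-- `Λ^{#}V_2(f) ≤ M`: the symmetric condition in the second variable. -/
def LamSharpV2 (lam : ℕ → ℝ) (f : ℝ → ℝ → ℝ) (M : ℝ) : Prop :=
  ∀ (m : ℕ) (a b x : ℕ → ℝ), Nonoverlap m a b → (∀ i < m, x i ∈ Set.Icc (0:ℝ) 1) →
    ∑ i ∈ Finset.range m, |f (x i) (b i) - f (x i) (a i)| / lam i ≤ M

/-- The class `Λ^{#}BV`. -/
def LamSharpBV (lam : ℕ → ℝ) (f : ℝ → ℝ → ℝ) : Prop :=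
  ∃ M : ℝ, LamSharpV1 lam f M ∧ LamSharpV2 lam f M

/-- `V_1^{#}(f, p(n) ↑ ∞) ≤ M`: for every `n`, every collection of nonoverlapping
intervals of lengths at least `2⁻ⁿ` and every choice of points `y i`, the `ℓ^{p(n)}`
sum of increments in the first variable is at most `M`. -/
def BVSharpV1 (p : ℕ → ℝ) (f : ℝ → ℝ → ℝ) (M : ℝ) : Prop :=
  ∀ (n m : ℕ) (a b y : ℕ → ℝ), Nonoverlap m a b →
    (∀ i < m, 1 / 2 ^ n ≤ b i - a i) →
    (∀ i < m, y i ∈ Set.Icc (0:ℝ) 1) →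
    (∑ i ∈ Finset.range m, |f (b i) (y i) - f (a i) (y i)| ^ p n) ^ (1 / p n) ≤ M

/-- `V_2^{#}(f, p(n) ↑ ∞) ≤ M`: the symmetric condition in the second variable. -/
def BVSharpV2 (p : ℕ → ℝ) (f : ℝ → ℝ → ℝ) (M : ℝ) : Prop :=
  ∀ (n m : ℕ) (a b x : ℕ → ℝ), Nonoverlap m a b →
    (∀ i < m, 1 / 2 ^ n ≤ b i - a i) →
    (∀ i < m, x i ∈ Set.Icc (0:ℝ) 1) →
    (∑ i ∈ Finset.range m, |f (x i) (b i) - f (x i) (a i)| ^ p n) ^ (1 / p n) ≤ M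

/-- The class `BV^{#}(p(n) ↑ ∞)`. -/
def BVSharp (p : ℕ → ℝ) (f : ℝ → ℝ → ℝ) : Prop :=
  ∃ M : ℝ, BVSharpV1 p f M ∧ BVSharpV2 p f M

section Aux

open Finset Real MeasureTheory

private lemma sumA {α : ℝ} (h0 : 0 < α) (h1 : α ≤ 1) (t : ℕ) :
    ∑ k ∈ range t, ((k:ℝ)+1) ^ (α-1) ≤ (1/α) * (t:ℝ) ^ α := by
  induction t with
  | zero => simp [Real.zero_rpow (ne_of_gt h0)]
  | succ t ih =>
    rw [Finset.sum_range_succ]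
    have htpos : (0:ℝ) < (t:ℝ)+1 := by positivity
    have key : (t:ℝ) ^ α ≤ ((t:ℝ)+1) ^ α - α * ((t:ℝ)+1) ^ (α-1) := by
      have hs : (-1:ℝ) ≤ -(1/((t:ℝ)+1)) := by
        rw [neg_le_neg_iff]
        rw [div_le_one htpos]; linarith
      have hb := rpow_one_add_le_one_add_mul_self hs (le_of_lt h0) h1
      have h1s : (1:ℝ) + -(1/((t:ℝ)+1)) = (t:ℝ)/((t:ℝ)+1) := by field_simp; ring
      rw [h1s] at hb
      have hmul := mul_le_mul_of_nonneg_right hb (le_of_lt (rpow_pos_of_pos htpos α))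
      have hl : ((t:ℝ)/((t:ℝ)+1)) ^ α * ((t:ℝ)+1) ^ α = (t:ℝ) ^ α := by
        rw [← Real.mul_rpow (by positivity) (le_of_lt htpos)]
        rw [div_mul_cancel₀]; exact ne_of_gt htpos
      have hr : (1 + α * -(1/((t:ℝ)+1))) * ((t:ℝ)+1) ^ α
          = ((t:ℝ)+1) ^ α - α * ((t:ℝ)+1) ^ (α-1) := by
        have : ((t:ℝ)+1) ^ (α-1) = ((t:ℝ)+1) ^ α / ((t:ℝ)+1) := by
          rw [Real.rpow_sub htpos, Real.rpow_one]
        rw [this]; field_simp; ring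
      rw [hl, hr] at hmul; exact hmul
    have : ((t:ℝ)+1) ^ (α-1) ≤ (1/α) * (((t:ℝ)+1)^α - (t:ℝ)^α) := by
      rw [one_div, ← div_eq_inv_mul, le_div_iff₀ h0, mul_comm]
      linarith [key]
    push_cast
    nlinarith [ih, this]

private lemma abelCompare (e w l : ℕ → ℝ) (B : ℝ)
    (he0 : ∀ k, 0 ≤ e k) (hes : ∀ k, e (k+1) ≤ e k) :
    ∀ m : ℕ, (∀ t ≤ m, ∑ k ∈ range t, w k ≤ B * ∑ k ∈ range t, l k) →
    ∑ k ∈ range m, e k * w k ≤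
      B * ∑ k ∈ range m, e k * l k - e m * (B * ∑ k ∈ range m, l k - ∑ k ∈ range m, w k) := by
  intro m
  induction m with
  | zero => intro _; simp
  | succ m ih =>
    intro hpre
    have ihm := ih (fun t ht => hpre t (le_trans ht (Nat.le_succ m)))
    have hX : 0 ≤ B * ∑ k ∈ range (m+1), l k - ∑ k ∈ range (m+1), w k := by
      have := hpre (m+1) le_rfl; linarith
    have hkey : e (m+1) * (B * ∑ k ∈ range (m+1), l k - ∑ k ∈ range (m+1), w k)
        ≤ e m * (B * ∑ k ∈ range (m+1), l k - ∑ k ∈ range (m+1), w k) :=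
      mul_le_mul_of_nonneg_right (hes m) hX
    rw [Finset.sum_range_succ (fun k => e k * w k), Finset.sum_range_succ (fun k => e k * l k)]
    rw [Finset.sum_range_succ l, Finset.sum_range_succ w] at hX hkey ⊢
    nlinarith [ihm, hkey]

private lemma count_le (n m : ℕ) (a b : ℕ → ℝ) (hno : Nonoverlap m a b)
    (hlen : ∀ i < m, 1 / 2 ^ n ≤ b i - a i) : m ≤ 2 ^ n := by
  obtain ⟨hab, hdisj⟩ := hno
  -- volumes
  have hsub : (⋃ i ∈ range m, Set.Ioo (a i) (b i)) ⊆ Set.Icc (0:ℝ) 1 := by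
    intro x hx
    simp only [Set.mem_iUnion] at hx
    obtain ⟨i, hi, hx⟩ := hx
    simp only [Finset.mem_range] at hi
    obtain ⟨h1, h2, h3⟩ := hab i hi
    exact ⟨le_of_lt (lt_of_le_of_lt h1 hx.1), le_of_lt (lt_of_lt_of_le hx.2 h3)⟩
  have hpair : (↑(range m) : Set ℕ).PairwiseDisjoint (fun i => Set.Ioo (a i) (b i)) := by
    intro i hi j hj hij
    simp only [Finset.coe_range, Set.mem_Iio] at hi hj
    exact Set.disjoint_iff_inter_eq_empty.mpr (hdisj i hi j hj hij)
  have hmeas := measure_biUnion_finset (μ := volume) hpair (fun i _ => measurableSet_Ioo)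
  have hle : ∑ i ∈ range m, volume (Set.Ioo (a i) (b i)) ≤ 1 := by
    rw [← hmeas]
    calc volume (⋃ i ∈ range m, Set.Ioo (a i) (b i)) ≤ volume (Set.Icc (0:ℝ) 1) :=
          measure_mono hsub
      _ = 1 := by rw [Real.volume_Icc]; norm_num
  have hlow : ∀ i ∈ range m, ENNReal.ofReal (1 / 2 ^ n) ≤ volume (Set.Ioo (a i) (b i)) := by
    intro i hi
    rw [Real.volume_Ioo]
    exact ENNReal.ofReal_le_ofReal (hlen i (Finset.mem_range.mp hi))
  have hsum : (m : ENNReal) * ENNReal.ofReal (1 / 2 ^ n) ≤ 1 := by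
    calc (m : ENNReal) * ENNReal.ofReal (1 / 2 ^ n)
        = ∑ _i ∈ range m, ENNReal.ofReal (1 / 2 ^ n) := by
          rw [Finset.sum_const, Finset.card_range, nsmul_eq_mul]
      _ ≤ ∑ i ∈ range m, volume (Set.Ioo (a i) (b i)) := Finset.sum_le_sum hlow
      _ ≤ 1 := hle
  -- convert to reals
  have h2 : (0:ℝ) < 1 / 2 ^ n := by positivity
  have : (m : ℝ) * (1 / 2 ^ n) ≤ 1 := by
    have := ENNReal.toReal_mono (by norm_num) hsum
    rwa [ENNReal.toReal_mul, ENNReal.toReal_natCast, ENNReal.toReal_ofReal (le_of_lt h2),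
      ENNReal.toReal_one] at this
  have hm : (m : ℝ) ≤ 2 ^ n := by
    rw [mul_one_div, div_le_one (by positivity)] at this; exact this
  have : ((m:ℝ)) ≤ ((2^n : ℕ) : ℝ) := by push_cast; exact hm
  exact_mod_cast this

private lemma sortPerm (d : ℕ → ℝ) (m : ℕ) :
    ∃ σ : ℕ → ℕ, (∀ i < m, σ i < m) ∧
      (∀ i < m, ∀ j < m, i ≠ j → σ i ≠ σ j) ∧
      (∀ g : ℕ → ℝ, ∑ i ∈ range m, g (σ i) = ∑ i ∈ range m, g i) ∧
      (∀ j k, j ≤ k → k < m → d (σ k) ≤ d (σ j)) := by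
  set f : Fin m → ℝ := fun i => -d i with hf
  set τ : Equiv.Perm (Fin m) := Tuple.sort f with hτ
  have hmonot : Monotone (f ∘ τ) := Tuple.monotone_sort f
  refine ⟨fun i => if h : i < m then (τ ⟨i, h⟩ : ℕ) else i, ?_, ?_, ?_, ?_⟩
  · intro i hi; simp only [dif_pos hi]; exact (τ ⟨i, hi⟩).isLt
  · intro i hi j hj hij
    simp only [dif_pos hi, dif_pos hj]
    intro h
    have h2 : τ ⟨i, hi⟩ = τ ⟨j, hj⟩ := Fin.ext h
    have h3 := τ.injective h2
    exact hij (congrArg Fin.val h3)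
  · intro g
    rw [← Fin.sum_univ_eq_sum_range (fun i => g (if h : i < m then (τ ⟨i, h⟩ : ℕ) else i)),
        ← Fin.sum_univ_eq_sum_range g]
    have : ∀ i : Fin m, g (if h : (i:ℕ) < m then (τ ⟨i, h⟩ : ℕ) else i) = g (τ i) := by
      intro i; simp [i.isLt]
    rw [Finset.sum_congr rfl (fun i _ => this i)]
    exact Equiv.sum_comp τ (fun i => g (i : ℕ))
  · intro j k hjk hk
    have hj : j < m := lt_of_le_of_lt hjk hk
    simp only [dif_pos hj, dif_pos hk]
    have := hmonot (show (⟨j, hj⟩ : Fin m) ≤ ⟨k, hk⟩ from hjk)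
    simpa [hf] using this

private lemma two_le_rpow_self_rpow_inv {q : ℝ} (hq : 1 ≤ q) : q ^ (1/q) ≤ 2 := by
  have hq0 : (0:ℝ) < q := lt_of_lt_of_le one_pos hq
  have h2q : q ≤ (2:ℝ) ^ q := by
    set N := ⌊q⌋₊ with hN
    have h1 : q < (N:ℝ) + 1 := Nat.lt_floor_add_one q
    have h2 : (N:ℝ) + 1 ≤ (2:ℝ) ^ (N:ℝ) := by
      have : N + 1 ≤ 2 ^ N := Nat.lt_two_pow_self
      calc (N:ℝ) + 1 ≤ ((2^N : ℕ) : ℝ) := by exact_mod_cast this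
        _ = (2:ℝ) ^ (N:ℝ) := by rw [Real.rpow_natCast]; push_cast; ring
    have h3 : (2:ℝ) ^ (N:ℝ) ≤ (2:ℝ) ^ q := by
      apply Real.rpow_le_rpow_of_exponent_le (by norm_num)
      exact Nat.floor_le (le_of_lt hq0)
    linarith
  calc q ^ (1/q) ≤ ((2:ℝ)^q) ^ (1/q) :=
        Real.rpow_le_rpow (le_of_lt hq0) h2q (by positivity)
    _ = 2 := by
        rw [← Real.rpow_mul (by norm_num : (0:ℝ) ≤ 2), mul_one_div_cancel (ne_of_gt hq0),
          Real.rpow_one]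

lemma v1_main (lam : ℕ → ℝ) (hmono : Monotone lam) (hlam1 : 1 < lam 0)
    (p : ℕ → ℝ) (hp1 : ∀ n, 1 ≤ p n) (C M : ℝ) (hC1 : 1 ≤ C) (hM1 : 1 ≤ M)
    (hC : ∀ n m : ℕ, 1 ≤ m → m ≤ 2 ^ n →
      (m : ℝ) ^ (1 / p n) / ∑ j ∈ Finset.range m, 1 / lam j ≤ C)
    (f : ℝ → ℝ → ℝ) (h1 : LamSharpV1 lam f M) :
    BVSharpV1 p f (2 * (C * M)) := by
  intro n m a b y hno hlen hy
  have lampos : ∀ j, 0 < lam j := fun j =>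
    lt_of_lt_of_le (lt_trans one_pos hlam1) (hmono (Nat.zero_le j))
  set q := p n with hqdef
  have hq : 1 ≤ q := hp1 n
  have hq0 : (0:ℝ) < q := lt_of_lt_of_le one_pos hq
  have hqne : q ≠ 0 := ne_of_gt hq0
  set α := 1/q with hα
  have hα0 : 0 < α := by positivity
  have hα1 : α ≤ 1 := by rw [hα]; rw [div_le_one hq0]; exact hq
  have hαq : α * q = 1 := by rw [hα, one_div_mul_cancel hqne]
  have hm2 : m ≤ 2 ^ n := count_le n m a b hno hlen
  set d : ℕ → ℝ := fun i => |f (b i) (y i) - f (a i) (y i)| with hd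
  have hd0 : ∀ i, 0 ≤ d i := fun i => abs_nonneg _
  obtain ⟨σ, hσlt, hσinj, hσsum, hσanti⟩ := sortPerm d m
  set e : ℕ → ℝ := fun k => if k < m then d (σ k) else 0 with he
  have he0 : ∀ k, 0 ≤ e k := by
    intro k; rw [he]; dsimp only; split
    · exact hd0 _
    · exact le_refl 0
  have hes : ∀ k, e (k+1) ≤ e k := by
    intro k; rw [he]; dsimp only
    by_cases h : k + 1 < m
    · rw [if_pos h, if_pos (Nat.lt_of_succ_lt h)]
      exact hσanti k (k+1) (Nat.le_succ k) h
    · rw [if_neg h]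
      split
      · exact hd0 _
      · exact le_refl 0
  have hanti : Antitone e := antitone_nat_of_succ_le hes
  set Lam : ℕ → ℝ := fun t => ∑ j ∈ range t, 1 / lam j with hLam
  have hLpos : ∀ t, 1 ≤ t → 0 < Lam t := by
    intro t ht
    rw [hLam]
    apply Finset.sum_pos (fun j _ => one_div_pos.mpr (lampos j))
    exact Finset.nonempty_range_iff.mpr (Nat.one_le_iff_ne_zero.mp ht)
  -- the Waterman sum bound for the rearranged family
  have hsum : ∑ k ∈ range m, e k / lam k ≤ M := by
    have heq : ∑ k ∈ range m, e k / lam k = ∑ k ∈ range m, d (σ k) / lam k := by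
      apply Finset.sum_congr rfl
      intro k hk
      rw [he]; dsimp only; rw [if_pos (Finset.mem_range.mp hk)]
    rw [heq]
    have hno' : Nonoverlap m (fun i => a (σ i)) (fun i => b (σ i)) := by
      constructor
      · intro i hi; exact hno.1 (σ i) (hσlt i hi)
      · intro i hi j hj hij
        exact hno.2 (σ i) (hσlt i hi) (σ j) (hσlt j hj) (hσinj i hi j hj hij)
    have hy' : ∀ i < m, y (σ i) ∈ Set.Icc (0:ℝ) 1 := fun i hi => hy (σ i) (hσlt i hi)
    exact h1 m (fun i => a (σ i)) (fun i => b (σ i)) (fun i => y (σ i)) hno' hy'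
  -- pointwise bound e k ≤ M / Lam (k+1)
  have hdk : ∀ k, k < m → e k ≤ M / Lam (k+1) := by
    intro k hk
    rw [le_div_iff₀ (hLpos (k+1) (Nat.le_add_left 1 k))]
    calc e k * Lam (k+1) = ∑ j ∈ range (k+1), e k / lam j := by
          rw [hLam, Finset.mul_sum]
          apply Finset.sum_congr rfl
          intro j _; rw [mul_one_div]
      _ ≤ ∑ j ∈ range (k+1), e j / lam j := by
          apply Finset.sum_le_sum
          intro j hj
          have hjk : j ≤ k := Nat.lt_succ_iff.mp (Finset.mem_range.mp hj)
          exact (div_le_div_iff_of_pos_right (lampos j)).mpr (hanti hjk)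
      _ ≤ ∑ j ∈ range m, e j / lam j := by
          apply Finset.sum_le_sum_of_subset_of_nonneg
          · exact Finset.range_subset_range.mpr hk
          · intro j _ _; exact div_nonneg (he0 j) (le_of_lt (lampos j))
      _ ≤ M := hsum
  -- condition: t^α ≤ C * Lam t
  have hcond : ∀ t : ℕ, 1 ≤ t → t ≤ m → (t:ℝ) ^ α ≤ C * Lam t := by
    intro t ht htm
    have := hC n t ht (le_trans htm hm2)
    rw [div_le_iff₀ (hLpos t ht)] at this
    calc (t:ℝ) ^ α = (t:ℝ) ^ (1 / p n) := by rw [hα, hqdef]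
      _ ≤ C * Lam t := this
  set w : ℕ → ℝ := fun k => (M / Lam (k+1)) ^ (q-1) with hw
  set B : ℝ := (M*C) ^ (q-1) * (q * C) with hB
  have hMC0 : (0:ℝ) < M * C := by nlinarith
  have hBnn : 0 ≤ (M*C) ^ (q-1) := Real.rpow_nonneg (le_of_lt hMC0) _
  -- prefix bound
  have hW : ∀ t, t ≤ m → ∑ k ∈ range t, w k ≤ B * Lam t := by
    intro t htm
    rcases Nat.eq_zero_or_pos t with ht0 | ht1
    · subst ht0; simp [hLam]
    have step1 : ∀ k ∈ range t, w k ≤ (M*C) ^ (q-1) * ((k:ℝ)+1) ^ (α-1) := by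
      intro k hk
      have hk1 : k + 1 ≤ m := le_trans (Nat.succ_le_of_lt (Finset.mem_range.mp hk)) htm
      have hkpos : (0:ℝ) < (k:ℝ) + 1 := by positivity
      have hcnd := hcond (k+1) (Nat.le_add_left 1 k) hk1
      push_cast at hcnd
      have hLk := hLpos (k+1) (Nat.le_add_left 1 k)
      have hrp : (0:ℝ) < ((k:ℝ)+1) ^ α := Real.rpow_pos_of_pos hkpos α
      have hfrac : M / Lam (k+1) ≤ M * C * ((k:ℝ)+1) ^ (-α) := by
        have h2 : ((k:ℝ)+1) ^ (-α) = 1 / ((k:ℝ)+1) ^ α := by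
          rw [Real.rpow_neg (le_of_lt hkpos), one_div]
        rw [div_le_iff₀ hLk, h2]
        have h3 : M * C * (1 / ((k:ℝ)+1) ^ α) * Lam (k+1)
            = M * C * Lam (k+1) / ((k:ℝ)+1) ^ α := by ring
        rw [h3, le_div_iff₀ hrp]
        nlinarith [mul_nonneg (le_trans zero_le_one hM1) (sub_nonneg.mpr hcnd)]
      calc w k ≤ (M * C * ((k:ℝ)+1) ^ (-α)) ^ (q-1) := by
            apply Real.rpow_le_rpow (div_nonneg (by linarith) (le_of_lt hLk)) hfrac
            linarith
        _ = (M*C) ^ (q-1) * (((k:ℝ)+1) ^ (-α)) ^ (q-1) :=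
            Real.mul_rpow (le_of_lt hMC0) (Real.rpow_nonneg (le_of_lt hkpos) _)
        _ = (M*C) ^ (q-1) * ((k:ℝ)+1) ^ (α-1) := by
            have hexp : -α * (q-1) = α - 1 := by linear_combination (-1 : ℝ) * hαq
            rw [← Real.rpow_mul (le_of_lt hkpos), hexp]
    have hsumA := sumA hα0 hα1 t
    have hiq : 1/α = q := by rw [hα, one_div_one_div]
    calc ∑ k ∈ range t, w k ≤ ∑ k ∈ range t, (M*C) ^ (q-1) * ((k:ℝ)+1) ^ (α-1) :=
          Finset.sum_le_sum step1
      _ = (M*C) ^ (q-1) * ∑ k ∈ range t, ((k:ℝ)+1) ^ (α-1) := by rw [Finset.mul_sum]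
      _ ≤ (M*C) ^ (q-1) * ((1/α) * (t:ℝ) ^ α) := by
          apply mul_le_mul_of_nonneg_left hsumA hBnn
      _ = (M*C) ^ (q-1) * (q * (t:ℝ) ^ α) := by rw [hiq]
      _ ≤ (M*C) ^ (q-1) * (q * (C * Lam t)) := by
          apply mul_le_mul_of_nonneg_left _ hBnn
          apply mul_le_mul_of_nonneg_left (hcond t ht1 htm) (le_of_lt hq0)
      _ = B * Lam t := by rw [hB]; ring
  -- Abel comparison
  have habel := abelCompare e w (fun j => 1 / lam j) B he0 hes m (fun t ht => hW t ht)
  have hX0 : 0 ≤ B * (∑ k ∈ range m, 1 / lam k) - ∑ k ∈ range m, w k := by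
    have := hW m le_rfl
    rw [hLam] at this
    linarith
  have hB0 : 0 ≤ B := by
    rw [hB]
    apply mul_nonneg hBnn
    nlinarith
  have heq2 : ∑ k ∈ range m, e k * (1 / lam k) = ∑ k ∈ range m, e k / lam k := by
    apply Finset.sum_congr rfl
    intro k _; rw [mul_one_div]
  have hfinal1 : ∑ k ∈ range m, e k * w k ≤ B * M := by
    have h5 : B * ∑ k ∈ range m, e k * (1 / lam k) ≤ B * M := by
      rw [heq2]; exact mul_le_mul_of_nonneg_left hsum hB0
    have h6 : 0 ≤ e m * (B * (∑ k ∈ range m, 1 / lam k) - ∑ k ∈ range m, w k) :=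
      mul_nonneg (he0 m) hX0
    calc ∑ k ∈ range m, e k * w k
        ≤ B * ∑ k ∈ range m, e k * (1 / lam k)
          - e m * (B * (∑ k ∈ range m, 1 / lam k) - ∑ k ∈ range m, w k) := habel
      _ ≤ B * M := by linarith
  -- pointwise power bound
  have hpoint : ∀ k ∈ range m, e k ^ q ≤ e k * w k := by
    intro k hk
    rcases (he0 k).eq_or_lt with h0 | hpos
    · rw [← h0]; simp [Real.zero_rpow hqne]
    · have hle := hdk k (Finset.mem_range.mp hk)
      have hsplit : e k ^ q = e k * e k ^ (q-1) := by
        have h3 := Real.rpow_add hpos 1 (q-1)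
        rw [Real.rpow_one] at h3
        have h4 : (1:ℝ) + (q-1) = q := by ring
        rw [h4] at h3
        exact h3
      rw [hsplit]
      apply mul_le_mul_of_nonneg_left _ (he0 k)
      exact Real.rpow_le_rpow (le_of_lt hpos) hle (by linarith)
  -- permutation invariance
  have hperm : ∑ i ∈ range m, d i ^ q = ∑ k ∈ range m, e k ^ q := by
    rw [← hσsum (fun i => d i ^ q)]
    apply Finset.sum_congr rfl
    intro k hk
    rw [he]; dsimp only; rw [if_pos (Finset.mem_range.mp hk)]
  have hMCq : (M*C) ^ (q-1) * (M*C) = (M*C) ^ q := by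
    have h3 := Real.rpow_add hMC0 (q-1) 1
    rw [Real.rpow_one] at h3
    have h4 : q - 1 + 1 = q := by ring
    rw [h4] at h3
    exact h3.symm
  have hsumq : ∑ i ∈ range m, d i ^ q ≤ q * (M*C) ^ q := by
    rw [hperm]
    calc ∑ k ∈ range m, e k ^ q ≤ ∑ k ∈ range m, e k * w k := Finset.sum_le_sum hpoint
      _ ≤ B * M := hfinal1
      _ = q * ((M*C) ^ (q-1) * (M*C)) := by rw [hB]; ring
      _ = q * (M*C) ^ q := by rw [hMCq]
  have hsnn : 0 ≤ ∑ i ∈ range m, d i ^ q :=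
    Finset.sum_nonneg fun i _ => Real.rpow_nonneg (hd0 i) q
  calc (∑ i ∈ range m, d i ^ q) ^ α ≤ (q * (M*C) ^ q) ^ α :=
        Real.rpow_le_rpow hsnn hsumq (le_of_lt hα0)
    _ = q ^ α * ((M*C) ^ q) ^ α :=
        Real.mul_rpow (le_of_lt hq0) (Real.rpow_nonneg (le_of_lt hMC0) q)
    _ = q ^ α * (M*C) := by
        rw [← Real.rpow_mul (le_of_lt hMC0)]
        rw [show q * α = 1 from by rw [mul_comm]; exact hαq, Real.rpow_one]
    _ ≤ 2 * (M*C) := by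
        apply mul_le_mul_of_nonneg_right _ (le_of_lt hMC0)
        rw [hα]
        exact two_le_rpow_self_rpow_inv hq
    _ = 2 * (C*M) := by ring

end Aux

/-- Theorem 1, sufficiency: if
`sup_n sup_{1 ≤ m ≤ 2^n} m^{1/p(n)} / ∑_{j=1}^m 1/λ_j < ∞`, then
`Λ^{#}BV ⊆ BV^{#}(p(n) ↑ ∞)`. -/
theorem lamSharpBV_subset_bvSharp
    (lam : ℕ → ℝ) (hmono : Monotone lam) (hlam1 : 1 < lam 0)
    (p : ℕ → ℝ) (hp1 : ∀ n, 1 ≤ p n) (hpmono : Monotone p)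
    (hptop : Filter.Tendsto p Filter.atTop Filter.atTop)
    (hbdd : ∃ C : ℝ, ∀ n m : ℕ, 1 ≤ m → m ≤ 2 ^ n →
      (m : ℝ) ^ (1 / p n) / ∑ j ∈ Finset.range m, 1 / lam j ≤ C)
    (f : ℝ → ℝ → ℝ) (hf : LamSharpBV lam f) :
    BVSharp p f := by
  obtain ⟨C, hC⟩ := hbdd
  obtain ⟨M, hMa, hMb⟩ := hf
  set C₁ := max C 1 with hC₁def
  set M₁ := max M 1 with hM₁def
  have hC₁ : ∀ n m : ℕ, 1 ≤ m → m ≤ 2 ^ n →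
      (m : ℝ) ^ (1 / p n) / ∑ j ∈ Finset.range m, 1 / lam j ≤ C₁ :=
    fun n m h1 h2 => le_trans (hC n m h1 h2) (le_max_left C 1)
  have h1' : LamSharpV1 lam f M₁ :=
    fun m a b y h h' => le_trans (hMa m a b y h h') (le_max_left M 1)
  have h2' : LamSharpV2 lam f M₁ :=
    fun m a b x h h' => le_trans (hMb m a b x h h') (le_max_left M 1)
  refine ⟨2 * (C₁ * M₁), ?_, ?_⟩
  · exact v1_main lam hmono hlam1 p hp1 C₁ M₁ (le_max_right C 1) (le_max_right M 1) hC₁ f h1'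
  · exact v1_main lam hmono hlam1 p hp1 C₁ M₁ (le_max_right C 1) (le_max_right M 1) hC₁
      (fun u v => f v u) h2'
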